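/- Let V be a complex Hilbert space and P(z) ∈ End⁺(V) depend continuously (in operator norm) on z in a topological space M, and let h(z) be a continuous family of bounded self-adjoint operators. Then the function S(z) = sup{⟨h(z)v, v⟩ : ⟨P(z)v, v⟩ = 1} is continuous, being equal to sup over unit vectors u of ⟨P(z)^{-1/2} h(z) P(z)^{-1/2} u, u⟩. -/

import Mathlib

open ContinuousLinearMap

section Aux

variable {V : Type*} [NormedAddCommGroup V] [InnerProductSpace ℂ V] [CompleteSpace V]

private theorem my_scale (A : V →L[ℂ] V) (a : ℝ) (v : V) :
    (inner ℂ (A ((a:ℂ) • v)) ((a:ℂ) • v) : ℂ).re = a^2 * (inner ℂ (A v) v : ℂ).re := by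
  rw [map_smul, inner_smul_left, inner_smul_right, Complex.conj_ofReal]
  rw [show ((a:ℂ) * ((a:ℂ) * (inner ℂ (A v) v : ℂ))) = ((a^2:ℝ):ℂ) * (inner ℂ (A v) v : ℂ) by
    push_cast; ring, Complex.re_ofReal_mul]

private theorem my_rebound (A : V →L[ℂ] V) (v : V) :
    |(inner ℂ (A v) v : ℂ).re| ≤ ‖A‖ * ‖v‖^2 := by
  calc |(inner ℂ (A v) v : ℂ).re| ≤ ‖(inner ℂ (A v) v : ℂ)‖ := Complex.abs_re_le_norm _
    _ ≤ ‖A v‖ * ‖v‖ := norm_inner_le_norm _ _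
    _ ≤ (‖A‖ * ‖v‖) * ‖v‖ := by gcongr; exact A.le_opNorm v
    _ = ‖A‖ * ‖v‖^2 := by ring

private theorem my_diffbound (A B : V →L[ℂ] V) (v : V) :
    |(inner ℂ (A v) v : ℂ).re - (inner ℂ (B v) v : ℂ).re| ≤ ‖A - B‖ * ‖v‖^2 := by
  have := my_rebound (A - B) v
  rwa [ContinuousLinearMap.sub_apply, inner_sub_left, Complex.sub_re] at this

private theorem my_cauchy (T : V →L[ℂ] V) (hT : T.IsPositive) (x y : V) :
    (inner ℂ (T x) y : ℂ).re ^ 2 ≤ (inner ℂ (T x) x : ℂ).re * (inner ℂ (T y) y : ℂ).re := by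
  have hsymm : (T : V →ₗ[ℂ] V).IsSymmetric := isSelfAdjoint_iff_isSymmetric.mp hT.isSelfAdjoint
  have hyx : (inner ℂ (T y) x : ℂ).re = (inner ℂ (T x) y : ℂ).re := by
    have h1 : (inner ℂ (T y) x : ℂ) = inner ℂ y (T x) := hsymm y x
    have h2 : (inner ℂ y (T x) : ℂ) = starRingEnd ℂ (inner ℂ (T x) y : ℂ) :=
      (inner_conj_symm _ _).symm
    rw [h1, h2, Complex.conj_re]
  have key : ∀ t : ℝ, 0 ≤ (inner ℂ (T y) y : ℂ).re * (t * t)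
      + (2 * (inner ℂ (T x) y : ℂ).re) * t + (inner ℂ (T x) x : ℂ).re := by
    intro t
    have h0 := hT.re_inner_nonneg_left (x + (t:ℂ) • y)
    simp only [map_add, map_smul, inner_add_left, inner_add_right, inner_smul_left,
      inner_smul_right, Complex.conj_ofReal, Complex.add_re, Complex.mul_re,
      Complex.ofReal_re, Complex.ofReal_im, RCLike.re_to_complex] at h0 ⊢
    rw [hyx] at h0
    ring_nf at h0 ⊢
    linarith
  have hd := discrim_le_zero key
  rw [discrim] at hd
  nlinarith [hd]

private theorem my_coercive [Nontrivial V] (T : V →L[ℂ] V) (hT : T.IsPositive)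
    (hU : IsUnit T) :
    ∃ c > 0, ∀ v : V, c * ‖v‖ ^ 2 ≤ (inner ℂ (T v) v : ℂ).re := by
  obtain ⟨u, hu⟩ := hU
  set Tinv : V →L[ℂ] V := ↑u⁻¹ with hTinv
  have hTT : ∀ v : V, T (Tinv v) = v := by
    intro v
    rw [← hu, ← ContinuousLinearMap.mul_apply, Units.mul_inv, ContinuousLinearMap.one_apply]
  have hTinv0 : Tinv ≠ 0 := by
    intro h0
    obtain ⟨v, hv⟩ := exists_ne (0 : V)
    apply hv
    rw [← hTT v, h0]; simp
  have hn : 0 < ‖Tinv‖ := norm_pos_iff.mpr hTinv0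
  refine ⟨‖Tinv‖⁻¹, by positivity, fun v => ?_⟩
  rcases eq_or_ne v 0 with rfl | hv0
  · simp
  · have hcs := my_cauchy T hT (Tinv v) v
    rw [hTT v] at hcs
    have h1 : (inner ℂ v v : ℂ).re = ‖v‖ ^ 2 := by
      simp [inner_self_eq_norm_sq_to_K, ← Complex.ofReal_pow]
    rw [h1] at hcs
    have h2 : (inner ℂ v (Tinv v) : ℂ).re ≤ ‖Tinv‖ * ‖v‖ ^ 2 := by
      calc (inner ℂ v (Tinv v) : ℂ).re ≤ ‖(inner ℂ v (Tinv v) : ℂ)‖ := Complex.re_le_norm _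
        _ ≤ ‖v‖ * ‖Tinv v‖ := norm_inner_le_norm _ _
        _ ≤ ‖v‖ * (‖Tinv‖ * ‖v‖) := by gcongr; exact Tinv.le_opNorm v
        _ = ‖Tinv‖ * ‖v‖ ^ 2 := by ring
    have hq : 0 ≤ (inner ℂ (T v) v : ℂ).re := hT.re_inner_nonneg_left v
    have hv : 0 < ‖v‖ := norm_pos_iff.mpr hv0
    rw [inv_mul_le_iff₀ hn]
    nlinarith [mul_le_mul_of_nonneg_right h2 hq, sq_nonneg ‖v‖, mul_pos hv hv]

private theorem my_setEq (A B : V →L[ℂ] V)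
    (hc : ∃ c > 0, ∀ v : V, c * ‖v‖ ^ 2 ≤ (inner ℂ (A v) v : ℂ).re) :
    {r : ℝ | ∃ v : V, (inner ℂ (A v) v : ℂ).re = 1 ∧ r = (inner ℂ (B v) v : ℂ).re}
      = (fun v : V => (inner ℂ (B v) v : ℂ).re / (inner ℂ (A v) v : ℂ).re)
        '' {v : V | ‖v‖ = 1} := by
  obtain ⟨c, hc0, hcv⟩ := hc
  ext r
  constructor
  · rintro ⟨v, hv1, rfl⟩
    have hv0 : v ≠ 0 := by
      rintro rfl
      simp at hv1
    have hnv : 0 < ‖v‖ := norm_pos_iff.mpr hv0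
    refine ⟨((‖v‖⁻¹ : ℝ) : ℂ) • v, ?_, ?_⟩
    · simp [norm_smul, abs_of_pos (inv_pos.mpr hnv), inv_mul_cancel₀ hnv.ne']
    · dsimp only
      rw [my_scale, my_scale, hv1]
      have ha : (‖v‖⁻¹) ^ 2 ≠ 0 := by positivity
      field_simp
  · rintro ⟨u, hu, rfl⟩
    have hq : 0 < (inner ℂ (A u) u : ℂ).re := by
      have := hcv u
      rw [Set.mem_setOf_eq] at hu
      rw [hu] at this
      nlinarith
    set t : ℝ := Real.sqrt (inner ℂ (A u) u : ℂ).re⁻¹ with ht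
    have ht2 : t ^ 2 = (inner ℂ (A u) u : ℂ).re⁻¹ := Real.sq_sqrt (by positivity)
    refine ⟨(t : ℂ) • u, ?_, ?_⟩
    · rw [my_scale, ht2, inv_mul_cancel₀ hq.ne']
    · dsimp only
      rw [my_scale, ht2]
      field_simp

end Aux

theorem stmt6
    {V : Type*} [NormedAddCommGroup V] [InnerProductSpace ℂ V] [CompleteSpace V]
    {M : Type*} [TopologicalSpace M]
    (P h : M → (V →L[ℂ] V))
    (hPcont : Continuous P) (hhcont : Continuous h)
    (hPpos : ∀ z, (P z).IsPositive) (hPinv : ∀ z, IsUnit (P z))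
    (hself : ∀ z, IsSelfAdjoint (h z)) :
    Continuous (fun z : M =>
      sSup {r : ℝ | ∃ v : V, (inner ℂ ((P z) v) v : ℂ).re = 1 ∧
        r = (inner ℂ ((h z) v) v : ℂ).re}) := by
  rw [continuous_iff_continuousAt]
  intro z₀
  rcases subsingleton_or_nontrivial V with hV | hV
  · -- trivial space: the set is always empty
    have he : ∀ z : M, {r : ℝ | ∃ v : V, (inner ℂ ((P z) v) v : ℂ).re = 1 ∧
        r = (inner ℂ ((h z) v) v : ℂ).re} = (∅ : Set ℝ) := by
      intro z; ext r
      simp only [Set.mem_setOf_eq, Set.mem_empty_iff_false, iff_false, not_exists]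
      rintro v ⟨hv1, -⟩
      rw [Subsingleton.elim v 0] at hv1
      simp at hv1
    simp only [he]
    exact continuousAt_const
  · have hsetEq : ∀ z : M, {r : ℝ | ∃ v : V, (inner ℂ ((P z) v) v : ℂ).re = 1 ∧
        r = (inner ℂ ((h z) v) v : ℂ).re}
        = (fun v : V => (inner ℂ ((h z) v) v : ℂ).re / (inner ℂ ((P z) v) v : ℂ).re)
          '' {v : V | ‖v‖ = 1} :=
      fun z => my_setEq _ _ (my_coercive _ (hPpos z) (hPinv z))
    simp only [hsetEq]
    refine Metric.tendsto_nhds.mpr ?_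
    intro ε hε
    obtain ⟨c, hc0, hcoer⟩ := my_coercive _ (hPpos z₀) (hPinv z₀)
    set H := ‖h z₀‖ with hH
    set K := ‖P z₀‖ with hK
    have hH0 : 0 ≤ H := norm_nonneg _
    have hK0 : 0 ≤ K := norm_nonneg _
    set δP := min (c/2) (ε*c^2/(8*(H+1))) with hδPdef
    set δh := ε*c^2/(8*(K+1)) with hδhdef
    have hδP0 : 0 < δP := lt_min (by positivity) (by positivity)
    have hδh0 : 0 < δh := by positivity
    have hev := ((Metric.tendsto_nhds.1 (hPcont.tendsto z₀)) δP hδP0).and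
      ((Metric.tendsto_nhds.1 (hhcont.tendsto z₀)) δh hδh0)
    obtain ⟨u0, hu0⟩ := exists_norm_eq V (zero_le_one (α := ℝ))
    have hu0mem : u0 ∈ {v : V | ‖v‖ = 1} := hu0
    filter_upwards [hev] with z hzd
    obtain ⟨hzP, hzh⟩ := hzd
    rw [dist_eq_norm] at hzP hzh
    -- pointwise facts for unit vectors
    have hq₀ : ∀ v : V, ‖v‖ = 1 → c ≤ (inner ℂ ((P z₀) v) v : ℂ).re := by
      intro v hv
      have := hcoer v
      rw [hv] at this
      simpa using this
    have hq₀K : ∀ v : V, ‖v‖ = 1 → |(inner ℂ ((P z₀) v) v : ℂ).re| ≤ K := by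
      intro v hv
      have := my_rebound (P z₀) v
      rw [hv] at this
      simpa using this
    have hn₀H : ∀ v : V, ‖v‖ = 1 → |(inner ℂ ((h z₀) v) v : ℂ).re| ≤ H := by
      intro v hv
      have := my_rebound (h z₀) v
      rw [hv] at this
      simpa using this
    have hqd : ∀ v : V, ‖v‖ = 1 →
        |(inner ℂ ((P z) v) v : ℂ).re - (inner ℂ ((P z₀) v) v : ℂ).re| ≤ δP := by
      intro v hv
      have := my_diffbound (P z) (P z₀) v
      rw [hv] at this
      simp only [one_pow, mul_one] at this
      exact this.trans hzP.le
    have hnd : ∀ v : V, ‖v‖ = 1 →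
        |(inner ℂ ((h z) v) v : ℂ).re - (inner ℂ ((h z₀) v) v : ℂ).re| ≤ δh := by
      intro v hv
      have := my_diffbound (h z) (h z₀) v
      rw [hv] at this
      simp only [one_pow, mul_one] at this
      exact this.trans hzh.le
    have hq : ∀ v : V, ‖v‖ = 1 → c/2 ≤ (inner ℂ ((P z) v) v : ℂ).re := by
      intro v hv
      have h1 := hq₀ v hv
      have h2 := (abs_le.1 (hqd v hv)).1
      have h3 : δP ≤ c/2 := min_le_left _ _
      linarith
    -- key uniform estimate
    have hkey : ∀ v : V, ‖v‖ = 1 →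
        |(inner ℂ ((h z) v) v : ℂ).re / (inner ℂ ((P z) v) v : ℂ).re
          - (inner ℂ ((h z₀) v) v : ℂ).re / (inner ℂ ((P z₀) v) v : ℂ).re| ≤ ε/2 := by
      intro v hv
      set n := (inner ℂ ((h z) v) v : ℂ).re
      set n₀ := (inner ℂ ((h z₀) v) v : ℂ).re
      set q := (inner ℂ ((P z) v) v : ℂ).re
      set q₀ := (inner ℂ ((P z₀) v) v : ℂ).re
      have hqv : c/2 ≤ q := hq v hv
      have hq₀v : c ≤ q₀ := hq₀ v hv
      have hqpos : 0 < q := lt_of_lt_of_le (by positivity) hqv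
      have hq₀pos : 0 < q₀ := lt_of_lt_of_le hc0 hq₀v
      have hnum : |n * q₀ - q * n₀| ≤ δh * K + H * δP := by
        have he : n * q₀ - q * n₀ = (n - n₀) * q₀ + n₀ * (q₀ - q) := by ring
        rw [he]
        calc |(n - n₀) * q₀ + n₀ * (q₀ - q)|
            ≤ |(n - n₀) * q₀| + |n₀ * (q₀ - q)| := abs_add_le _ _
          _ = |n - n₀| * |q₀| + |n₀| * |q₀ - q| := by rw [abs_mul, abs_mul]
          _ ≤ δh * K + H * δP := by
              have e1 : |q₀ - q| = |q - q₀| := abs_sub_comm _ _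
              rw [e1]
              gcongr
              · exact hnd v hv
              · exact hq₀K v hv
              · exact hn₀H v hv
              · exact hqd v hv
      have hden : c/2 * c ≤ q * q₀ := mul_le_mul hqv hq₀v hc0.le (by linarith)
      rw [div_sub_div n n₀ hqpos.ne' hq₀pos.ne', abs_div,
        abs_of_pos (mul_pos hqpos hq₀pos)]
      calc |n * q₀ - q * n₀| / (q * q₀)
          ≤ (δh * K + H * δP) / (c/2 * c) :=
            div_le_div₀ (by positivity) hnum (by positivity) hden
        _ ≤ ε/2 := by
            rw [div_le_iff₀ (by positivity)]
            have e1 : δh * (K + 1) = ε * c^2 / 8 := by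
              rw [hδhdef]; field_simp
            have e2 : δP ≤ ε * c^2 / (8 * (H + 1)) := min_le_right _ _
            have e3 : (H + 1) * (ε * c^2 / (8 * (H + 1))) = ε * c^2 / 8 := by
              field_simp
            nlinarith [mul_le_mul_of_nonneg_left e2 (by linarith : (0:ℝ) ≤ H + 1)]
    -- bounded above and nonempty
    have hbdd₀ : BddAbove ((fun v : V => (inner ℂ ((h z₀) v) v : ℂ).re
        / (inner ℂ ((P z₀) v) v : ℂ).re) '' {v : V | ‖v‖ = 1}) := by
      refine ⟨H / c, ?_⟩
      rintro r ⟨v, hv, rfl⟩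
      have h1 := hn₀H v hv
      have h2 := hq₀ v hv
      exact div_le_div₀ hH0 (le_of_abs_le h1) hc0 h2
    have hbdd : BddAbove ((fun v : V => (inner ℂ ((h z) v) v : ℂ).re
        / (inner ℂ ((P z) v) v : ℂ).re) '' {v : V | ‖v‖ = 1}) := by
      refine ⟨(H + δh) / (c/2), ?_⟩
      rintro r ⟨v, hv, rfl⟩
      have h1 := hn₀H v hv
      have h2 := (abs_le.1 (hnd v hv)).2
      have h3 := hq v hv
      exact div_le_div₀ (by linarith [le_of_abs_le h1]) (by linarith [le_of_abs_le h1])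
        (by positivity) h3
    have hne : ((fun v : V => (inner ℂ ((h z) v) v : ℂ).re
        / (inner ℂ ((P z) v) v : ℂ).re) '' {v : V | ‖v‖ = 1}).Nonempty :=
      ⟨_, Set.mem_image_of_mem _ hu0mem⟩
    have hne₀ : ((fun v : V => (inner ℂ ((h z₀) v) v : ℂ).re
        / (inner ℂ ((P z₀) v) v : ℂ).re) '' {v : V | ‖v‖ = 1}).Nonempty :=
      ⟨_, Set.mem_image_of_mem _ hu0mem⟩
    have h1 : sSup ((fun v : V => (inner ℂ ((h z) v) v : ℂ).re
          / (inner ℂ ((P z) v) v : ℂ).re) '' {v : V | ‖v‖ = 1})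
        ≤ sSup ((fun v : V => (inner ℂ ((h z₀) v) v : ℂ).re
          / (inner ℂ ((P z₀) v) v : ℂ).re) '' {v : V | ‖v‖ = 1}) + ε/2 := by
      refine csSup_le hne ?_
      rintro r ⟨v, hv, rfl⟩
      have hk := (abs_le.1 (hkey v hv)).2
      have hle := le_csSup hbdd₀ (Set.mem_image_of_mem
        (fun v : V => (inner ℂ ((h z₀) v) v : ℂ).re / (inner ℂ ((P z₀) v) v : ℂ).re) hv)
      dsimp only at hk hle ⊢
      linarith
    have h2 : sSup ((fun v : V => (inner ℂ ((h z₀) v) v : ℂ).re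
          / (inner ℂ ((P z₀) v) v : ℂ).re) '' {v : V | ‖v‖ = 1})
        ≤ sSup ((fun v : V => (inner ℂ ((h z) v) v : ℂ).re
          / (inner ℂ ((P z) v) v : ℂ).re) '' {v : V | ‖v‖ = 1}) + ε/2 := by
      refine csSup_le hne₀ ?_
      rintro r ⟨v, hv, rfl⟩
      have hk := (abs_le.1 (hkey v hv)).1
      have hle := le_csSup hbdd (Set.mem_image_of_mem
        (fun v : V => (inner ℂ ((h z) v) v : ℂ).re / (inner ℂ ((P z) v) v : ℂ).re) hv)
      dsimp only at hk hle ⊢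
      linarith
    rw [Real.dist_eq, abs_sub_lt_iff]
    constructor <;> linarith
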